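/- Let n ≥ 1, and let X₀ be a real M×v matrix such that X₀ᵀX₀ is invertible. Set X = Iₙ ⊗ X₀, H = (1,1,...,1)₁ₓₙ ⊗ I_v, Z = (XᵀX)⁻¹, and let D ∈ ℝᵛ. Let Θ ∈ ℝ^{nv} satisfy HΘ = D. Let (Ω,P) be a probability space and e : Ω → ℝ^{nM} a random vector whose entries have integrable products, such that (M/(4N))·I − E[eeᵀ] is positive semidefinite for some constants M, N > 0. Define Ŷ = XΘ + e and the constrained least-squares estimator Θ̂_CLS = Θ̂_LS − ZHᵀ(HZHᵀ)⁻¹(HΘ̂_LS − D), where Θ̂_LS = ZXᵀŶ. Then E[‖Θ̂_CLS − Θ‖²] ≤ ((n−1)M/(4N))·Tr[(X₀ᵀX₀)⁻¹]. -/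

import Mathlib

open MeasureTheory Matrix
open scoped Kronecker

lemma sum_eq_trace_aux {p q : Type*} [Fintype p] [Fintype q]
    (A : Matrix p q ℝ) (S : Matrix q q ℝ) (hS : ∀ j k, S j k = S k j) :
    ∑ i, ∑ j, ∑ k, A i j * A i k * S j k = (Aᵀ * A * S).trace := by
  rw [Matrix.trace]
  simp only [Matrix.diag, Matrix.mul_apply, Matrix.transpose_apply, Finset.sum_mul]
  rw [Finset.sum_comm]
  refine Finset.sum_congr rfl fun j _ => ?_
  rw [Finset.sum_comm]
  exact Finset.sum_congr rfl fun k _ => Finset.sum_congr rfl fun i _ => by rw [hS j k]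

lemma trace_mul_le_of_posSemidef {q : Type*} [Fintype q] [DecidableEq q]
    (G S : Matrix q q ℝ) (hG : G.PosSemidef) (c : ℝ)
    (h : (c • (1 : Matrix q q ℝ) - S).PosSemidef) :
    (G * S).trace ≤ c * G.trace := by
  have hn : 0 ≤ (G * (c • (1 : Matrix q q ℝ) - S)).trace := by
    open scoped MatrixOrder in
    obtain ⟨B, rfl⟩ := CStarAlgebra.nonneg_iff_eq_star_mul_self.mp hG.nonneg
    rw [Matrix.mul_assoc, Matrix.trace_mul_comm]
    refine Finset.sum_nonneg fun i _ => ?_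
    simpa [Matrix.mulVec_single, dotProduct, Pi.single_apply, Matrix.star_eq_conjTranspose] using
      (h.mul_mul_conjTranspose_same B).dotProduct_mulVec_nonneg (Pi.single i 1)
  rw [Matrix.mul_sub, Matrix.trace_sub, Matrix.mul_smul, Matrix.mul_one,
    Matrix.trace_smul, smul_eq_mul] at hn
  linarith

/-- error bound for the constrained least-squares estimator. -/
theorem cls_error_bound
    {Ω : Type*} [MeasureSpace Ω] [IsProbabilityMeasure (volume : Measure Ω)]
    (n M v : ℕ) (hn : 1 ≤ n) (hM : 0 < M)
    (X₀ : Matrix (Fin M) (Fin v) ℝ) (hX₀ : IsUnit (X₀ᵀ * X₀).det)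
    (N : ℝ) (hN : 0 < N)
    (D : Fin v → ℝ) (Θ : Fin n × Fin v → ℝ)
    (X : Matrix (Fin n × Fin M) (Fin n × Fin v) ℝ)
    (hX : X = (1 : Matrix (Fin n) (Fin n) ℝ) ⊗ₖ X₀)
    (H : Matrix (Fin v) (Fin n × Fin v) ℝ)
    (hH : ∀ a i, H a i = if i.2 = a then 1 else 0)
    (hΘ : H.mulVec Θ = D)
    (e : Ω → Fin n × Fin M → ℝ)
    (he : ∀ i j, Integrable fun ω => e ω i * e ω j)
    (hcov : (((M : ℝ) / (4 * N)) • (1 : Matrix (Fin n × Fin M) (Fin n × Fin M) ℝ)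
        - Matrix.of fun i j => ∫ ω, e ω i * e ω j).PosSemidef)
    (Z : Matrix (Fin n × Fin v) (Fin n × Fin v) ℝ) (hZ : Z = (Xᵀ * X)⁻¹)
    (Yhat : Ω → Fin n × Fin M → ℝ) (hYhat : ∀ ω, Yhat ω = X.mulVec Θ + e ω)
    (ΘLS : Ω → Fin n × Fin v → ℝ)
    (hLS : ∀ ω, ΘLS ω = Z.mulVec (Xᵀ.mulVec (Yhat ω)))
    (ΘCLS : Ω → Fin n × Fin v → ℝ)
    (hCLS : ∀ ω, ΘCLS ω = ΘLS ω
        - (Z * Hᵀ * (H * Z * Hᵀ)⁻¹).mulVec (H.mulVec (ΘLS ω) - D)) :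
    ∫ ω, ∑ i, (ΘCLS ω i - Θ i) ^ 2
      ≤ ((n : ℝ) - 1) * M / (4 * N) * ((X₀ᵀ * X₀)⁻¹).trace := by
  have hn0 : ((n : ℝ)) ≠ 0 := Nat.cast_ne_zero.mpr (by omega)
  -- structure of XᵀX and Z
  have hXtX : Xᵀ * X = (1 : Matrix (Fin n) (Fin n) ℝ) ⊗ₖ (X₀ᵀ * X₀) := by
    rw [hX, ← Matrix.kroneckerMap_transpose, ← Matrix.mul_kronecker_mul,
      Matrix.transpose_one, Matrix.one_mul]
  have hdet : IsUnit (Xᵀ * X).det := by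
    rw [hXtX, Matrix.det_kronecker, Matrix.det_one, one_pow, one_mul]
    exact hX₀.pow _
  have hZK : Z = (1 : Matrix (Fin n) (Fin n) ℝ) ⊗ₖ (X₀ᵀ * X₀)⁻¹ := by
    rw [hZ, hXtX, Matrix.inv_kronecker, inv_one]
  have hZXX : Z * (Xᵀ * X) = 1 := by rw [hZ]; exact Matrix.nonsing_inv_mul _ hdet
  have hXXZ : (Xᵀ * X) * Z = 1 := by rw [hZ]; exact Matrix.mul_nonsing_inv _ hdet
  have hZsym : Zᵀ = Z := by
    rw [hZ, Matrix.transpose_nonsing_inv]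
    congr 1
    rw [Matrix.transpose_mul, Matrix.transpose_transpose]
  -- H sandwich lemma
  have hHK : ∀ C : Matrix (Fin v) (Fin v) ℝ,
      H * ((1 : Matrix (Fin n) (Fin n) ℝ) ⊗ₖ C) * Hᵀ = (n : ℝ) • C := by
    intro C; ext a b
    simp [Matrix.mul_apply, hH, Fintype.sum_prod_type, Matrix.one_apply, ite_mul, mul_ite,
      Finset.mul_sum, Matrix.smul_apply, mul_comm]
  have hHZH : H * Z * Hᵀ = (n : ℝ) • (X₀ᵀ * X₀)⁻¹ := by rw [hZK]; exact hHK _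
  have hQ : (H * Z * Hᵀ)⁻¹ = ((n : ℝ)⁻¹) • (X₀ᵀ * X₀) := by
    apply Matrix.inv_eq_right_inv
    rw [hHZH, Matrix.smul_mul, Matrix.mul_smul, smul_smul,
      Matrix.nonsing_inv_mul _ hX₀, mul_inv_cancel₀ hn0, one_smul]
  have hQH : (H * Z * Hᵀ) * (H * Z * Hᵀ)⁻¹ = 1 := by
    rw [hQ, hHZH, Matrix.smul_mul, Matrix.mul_smul, smul_smul,
      Matrix.nonsing_inv_mul _ hX₀, mul_inv_cancel₀ hn0, one_smul]
  set Q : Matrix (Fin v) (Fin v) ℝ := (H * Z * Hᵀ)⁻¹ with hQdef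
  have hQcancel : ∀ C : Matrix (Fin v) (Fin n × Fin v) ℝ,
      H * (Z * (Hᵀ * (Q * C))) = C := by
    intro C
    calc H * (Z * (Hᵀ * (Q * C)))
        = (H * Z * Hᵀ * Q) * C := by simp only [Matrix.mul_assoc]
      _ = C := by rw [hQH, Matrix.one_mul]
  -- the error matrix
  set B : Matrix (Fin n × Fin v) (Fin n × Fin v) ℝ := Z * Hᵀ * Q * H with hBdef
  set A : Matrix (Fin n × Fin v) (Fin n × Fin M) ℝ := (1 - B) * (Z * Xᵀ) with hAdef
  have hAe : ∀ ω, ΘCLS ω - Θ = A.mulVec (e ω) := by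
    intro ω
    have hLS' : ΘLS ω = Θ + (Z * Xᵀ).mulVec (e ω) := by
      rw [hLS, hYhat, Matrix.mulVec_add, Matrix.mulVec_add, Matrix.mulVec_mulVec,
        Matrix.mulVec_mulVec, Matrix.mulVec_mulVec, Matrix.mul_assoc Z Xᵀ X, hZXX,
        Matrix.one_mulVec]
    have hHe : H.mulVec (Θ + (Z * Xᵀ).mulVec (e ω)) - D
        = (H * (Z * Xᵀ)).mulVec (e ω) := by
      rw [Matrix.mulVec_add, hΘ, Matrix.mulVec_mulVec]
      abel
    rw [hCLS ω, hLS', hHe, Matrix.mulVec_mulVec, hAdef, hBdef, Matrix.sub_mul,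
      Matrix.one_mul, Matrix.sub_mulVec,
      show Z * Hᵀ * Q * (H * (Z * Xᵀ))
        = Z * Hᵀ * Q * H * (Z * Xᵀ) by simp only [Matrix.mul_assoc]]
    abel
  -- pointwise expansion
  have hpt : ∀ ω, ∑ i, (ΘCLS ω i - Θ i) ^ 2
      = ∑ i, ∑ j, ∑ k, A i j * A i k * (e ω j * e ω k) := by
    intro ω
    refine Finset.sum_congr rfl fun i _ => ?_
    have h1 : ΘCLS ω i - Θ i = A.mulVec (e ω) i := congrFun (hAe ω) i
    rw [h1]
    simp only [Matrix.mulVec, dotProduct]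
    rw [sq, Finset.sum_mul_sum]
    exact Finset.sum_congr rfl fun j _ => Finset.sum_congr rfl fun k _ => by ring
  -- integrate
  have hInt : ∫ ω, ∑ i, (ΘCLS ω i - Θ i) ^ 2
      = ∑ i, ∑ j, ∑ k, A i j * A i k * (∫ ω, e ω j * e ω k) := by
    simp_rw [hpt]
    rw [integral_finset_sum _ (fun i _ => integrable_finset_sum _
      (fun j _ => integrable_finset_sum _ (fun k _ => (he j k).const_mul _)))]
    refine Finset.sum_congr rfl fun i _ => ?_
    rw [integral_finset_sum _ (fun j _ => integrable_finset_sum _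
      (fun k _ => (he j k).const_mul _))]
    refine Finset.sum_congr rfl fun j _ => ?_
    rw [integral_finset_sum _ (fun k _ => (he j k).const_mul _)]
    exact Finset.sum_congr rfl fun k _ => integral_const_mul _ _
  -- to trace form
  have hSsym : ∀ j k, (Matrix.of fun i j => ∫ ω, e ω i * e ω j) j k
      = (Matrix.of fun i j => ∫ ω, e ω i * e ω j) k j := by
    intro j k
    simp only [Matrix.of_apply]
    simp_rw [mul_comm]
  have htr : ∑ i, ∑ j, ∑ k, A i j * A i k * (∫ ω, e ω j * e ω k)
      = (Aᵀ * A * Matrix.of fun i j => ∫ ω, e ω i * e ω j).trace :=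
    sum_eq_trace_aux A _ hSsym
  -- psd of AᵀA
  have hG : (Aᵀ * A).PosSemidef := by
    have hct : Aᴴ = Aᵀ := by ext i j; simp [Matrix.conjTranspose_apply]
    rw [← hct]
    exact Matrix.posSemidef_conjTranspose_mul_self A
  have hbound : (Aᵀ * A * Matrix.of fun i j => ∫ ω, e ω i * e ω j).trace
      ≤ ((M : ℝ) / (4 * N)) * (Aᵀ * A).trace :=
    trace_mul_le_of_posSemidef _ _ hG _ hcov
  -- algebraic identities for the trace
  have hBsymZ : Z * Bᵀ = B * Z := by
    have hQsym : Qᵀ = Q := by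
      rw [hQdef, Matrix.transpose_nonsing_inv]
      congr 1
      rw [Matrix.transpose_mul, Matrix.transpose_mul, Matrix.transpose_transpose, hZsym,
        Matrix.mul_assoc]
    rw [hBdef]
    simp only [Matrix.transpose_mul, Matrix.transpose_transpose, hQsym, hZsym,
      Matrix.mul_assoc]
  have hBB : B * B = B := by
    rw [hBdef]
    simp only [Matrix.mul_assoc]
    rw [hQcancel]
  have hZXZX : (Z * Xᵀ) * (Z * Xᵀ)ᵀ = Z := by
    rw [Matrix.transpose_mul, Matrix.transpose_transpose, hZsym]
    calc Z * Xᵀ * (X * Z) = Z * ((Xᵀ * X) * Z) := by simp only [Matrix.mul_assoc]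
      _ = Z := by rw [hXXZ, Matrix.mul_one]
  have hAAt : A * Aᵀ = Z - B * Z := by
    calc A * Aᵀ = (1 - B) * ((Z * Xᵀ) * (Z * Xᵀ)ᵀ) * (1 - B)ᵀ := by
          rw [hAdef, Matrix.transpose_mul]
          simp only [Matrix.mul_assoc]
      _ = (1 - B) * Z * (1 - B)ᵀ := by rw [hZXZX]
      _ = Z - B * Z := by
          rw [Matrix.transpose_sub, Matrix.transpose_one]
          have expand : (1 - B) * Z * (1 - Bᵀ) = Z - B * Z - Z * Bᵀ + B * (Z * Bᵀ) := by
            noncomm_ring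
          rw [expand, hBsymZ, ← Matrix.mul_assoc, hBB]
          abel
  have htrZ : Z.trace = (n : ℝ) * ((X₀ᵀ * X₀)⁻¹).trace := by
    rw [hZK, Matrix.trace_kronecker, Matrix.trace_one, Fintype.card_fin]
  have htrBZ : (B * Z).trace = ((X₀ᵀ * X₀)⁻¹).trace := by
    have hZZ : Z * Z = (1 : Matrix (Fin n) (Fin n) ℝ) ⊗ₖ ((X₀ᵀ * X₀)⁻¹ * (X₀ᵀ * X₀)⁻¹) := by
      rw [hZK, ← Matrix.mul_kronecker_mul, Matrix.one_mul]
    calc (B * Z).trace = ((Z * Hᵀ * Q) * (H * Z)).trace := by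
          rw [hBdef]; congr 1; simp only [Matrix.mul_assoc]
      _ = ((H * Z) * (Z * Hᵀ * Q)).trace := Matrix.trace_mul_comm _ _
      _ = ((H * (Z * Z) * Hᵀ) * Q).trace := by
          congr 1; simp only [Matrix.mul_assoc]
      _ = ((((n : ℝ)) • ((X₀ᵀ * X₀)⁻¹ * (X₀ᵀ * X₀)⁻¹)) * (((n : ℝ)⁻¹) • (X₀ᵀ * X₀))).trace := by
          rw [hZZ, hHK, hQ]
      _ = ((X₀ᵀ * X₀)⁻¹).trace := by
          rw [Matrix.smul_mul, Matrix.mul_smul, smul_smul, mul_inv_cancel₀ hn0, one_smul,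
            Matrix.mul_assoc, Matrix.nonsing_inv_mul _ hX₀, Matrix.mul_one]
  have htrG : (Aᵀ * A).trace = ((n : ℝ) - 1) * ((X₀ᵀ * X₀)⁻¹).trace := by
    rw [Matrix.trace_mul_comm, hAAt, Matrix.trace_sub, htrZ, htrBZ]
    ring
  calc ∫ ω, ∑ i, (ΘCLS ω i - Θ i) ^ 2
      = (Aᵀ * A * Matrix.of fun i j => ∫ ω, e ω i * e ω j).trace := hInt.trans htr
    _ ≤ ((M : ℝ) / (4 * N)) * (Aᵀ * A).trace := hbound
    _ = ((n : ℝ) - 1) * M / (4 * N) * ((X₀ᵀ * X₀)⁻¹).trace := by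
        rw [htrG]; ring
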